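/- Correctness of the modified Hadamard test for anticommutator overlaps: let ψ₀ ∈ ℂ^d, let U and w be unitary complex d×d matrices, and let H be a Hermitian d×d matrix. Define the (2d)-dimensional vector φ indexed by Fin 2 × Fin d via φ(0, i) = (1/√2) · (U ψ₀)(i) and φ(1, i) = (1/√2) · (U (w ψ₀))(i), let Y be the Pauli matrix with entries Y₀₀ = Y₁₁ = 0, Y₀₁ = -i, Y₁₀ = i, and let B = Y ⊗ H be the Kronecker product acting on ℂ² ⊗ ℂ^d ≅ ℂ^(2d). Then ⟪φ, B φ⟫ = (1/2) ⟪ψ₀, (Ω * w - wᴴ * Ω) ψ₀⟫, where Ω = -i · (Uᴴ * H * U). -/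

import Mathlib

open Matrix Kronecker

/-- Interpret a tuple indexed by `n` as a vector of the corresponding Euclidean space. -/
def toEucIdx (n : Type*) [Fintype n] : (n → ℂ) → EuclideanSpace ℂ n := fun x => WithLp.toLp 2 x

/-- Correctness of the modified Hadamard test for anticommutator
overlaps: with `φ(0,·) = (1/√2) U ψ₀`, `φ(1,·) = (1/√2) U w ψ₀`, `B = Y ⊗ H` for the
Pauli matrix `Y`, and `Ω = -i Uᴴ H U`, one has
`⟪φ, B φ⟫ = (1/2) ⟪ψ₀, (Ω w - wᴴ Ω) ψ₀⟫`. -/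
theorem hadamard_test_anticommutator (d : ℕ) (hd : 1 ≤ d)
    (ψ₀ : EuclideanSpace ℂ (Fin d))
    (U w : Matrix (Fin d) (Fin d) ℂ)
    (hU : Uᴴ * U = 1) (hw : wᴴ * w = 1)
    (H : Matrix (Fin d) (Fin d) ℂ) (hH : Hᴴ = H)
    (Y : Matrix (Fin 2) (Fin 2) ℂ)
    (hY : Y = !![0, -Complex.I; Complex.I, 0])
    (B : Matrix (Fin 2 × Fin d) (Fin 2 × Fin d) ℂ)
    (hB : B = Y ⊗ₖ H)
    (φ : EuclideanSpace ℂ (Fin 2 × Fin d))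
    (hφ0 : ∀ i : Fin d, φ (0, i) = ((Real.sqrt 2)⁻¹ : ℂ) * U.mulVec ψ₀ i)
    (hφ1 : ∀ i : Fin d, φ (1, i) = ((Real.sqrt 2)⁻¹ : ℂ) * U.mulVec (w.mulVec ψ₀) i)
    (Ω : Matrix (Fin d) (Fin d) ℂ)
    (hΩ : Ω = (-Complex.I) • (Uᴴ * H * U)) :
    (inner ℂ φ (toEucIdx (Fin 2 × Fin d) (B.mulVec φ)) : ℂ) =
      (1 / 2 : ℂ) * (inner ℂ ψ₀ (toEucIdx (Fin d) ((Ω * w - wᴴ * Ω).mulVec ψ₀)) : ℂ) := by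
  classical
  set c : ℂ := ((Real.sqrt 2)⁻¹ : ℂ) with hcdef
  have hc : (starRingEnd ℂ) c = c := by
    simp [hcdef, map_inv₀, Complex.conj_ofReal]
  have hcc : c * c = 1/2 := by
    rw [hcdef, ← mul_inv, ← Complex.ofReal_mul, Real.mul_self_sqrt (by norm_num)]
    norm_num
  set u : Fin d → ℂ := U.mulVec ψ₀ with hu
  set v : Fin d → ℂ := U.mulVec (w.mulVec ψ₀) with hv
  have expand : (inner ℂ φ (toEucIdx (Fin 2 × Fin d) (B.mulVec φ)) : ℂ) =
      c * c * ((-Complex.I) * (star u ⬝ᵥ H.mulVec v)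
        + Complex.I * (star v ⬝ᵥ H.mulVec u)) := by
    simp only [toEucIdx, PiLp.inner_apply, RCLike.inner_apply, Matrix.mulVec, dotProduct,
      hB, hY, Matrix.kroneckerMap_apply, Fintype.sum_prod_type, Fin.sum_univ_two,
      Matrix.cons_val', Matrix.cons_val_zero, Matrix.cons_val_one, Matrix.head_cons,
      Matrix.empty_val', Matrix.cons_val_fin_one, Matrix.head_fin_const,
      hφ0, hφ1, Pi.star_apply, _root_.map_mul, hc, zero_mul, mul_zero, zero_add, add_zero,
      Complex.star_def, Matrix.of_apply, Matrix.cons_val_zero, Matrix.cons_val_one,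
      Finset.mul_sum, Finset.sum_mul, Finset.sum_const_zero]
    simp only [mul_add, Finset.mul_sum, ← Finset.sum_add_distrib]
    refine Finset.sum_congr rfl fun x _ => ?_
    refine Finset.sum_congr rfl fun i _ => ?_
    ring
  rw [expand, hcc]
  have hRinner : (inner ℂ ψ₀ (toEucIdx (Fin d) ((Ω * w - wᴴ * Ω).mulVec ψ₀)) : ℂ)
      = star (ψ₀ : Fin d → ℂ) ⬝ᵥ (Ω * w - wᴴ * Ω) *ᵥ ψ₀ := by
    simp [toEucIdx, PiLp.inner_apply, RCLike.inner_apply, dotProduct, Complex.star_def, mul_comm]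
  rw [hRinner]
  congr 1
  rw [hu, hv, hΩ]
  simp only [Matrix.star_mulVec, Matrix.mulVec_mulVec, Matrix.dotProduct_mulVec,
    Matrix.vecMul_vecMul, Matrix.conjTranspose_conjTranspose, hH,
    Matrix.smul_mul, Matrix.mul_smul, Matrix.sub_mul, Matrix.mul_sub,
    Matrix.sub_vecMul, Matrix.smul_vecMul, sub_dotProduct, smul_dotProduct,
    Matrix.conjTranspose_mul, Matrix.mul_assoc]
  simp only [← Matrix.dotProduct_mulVec, Matrix.sub_mulVec, Matrix.smul_mulVec,
    dotProduct_sub, dotProduct_smul, smul_eq_mul, Matrix.mulVec_mulVec,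
    Matrix.mul_assoc]
  ring
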